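/- Let y : [0,∞) → ℝ be continuous and Λ ∈ ℝ. Suppose f : [0,∞) → ℝ is continuously differentiable with f(0) = 0, f'(0) = 0, and f'(x) = y(x) f(x) − ∫₀ˣ y(t) f'(t) dt − Λ ∫₀ˣ f(t) dt for all x ≥ 0. Then f vanishes identically on [0,∞). (Consequently, each eigenvalue of the associated boundary value problem has an at most one-dimensional eigenspace.) -/

import Mathlib

open MeasureTheory Set Filter

/-- Uniqueness (Gronwall): a C¹ solution of the integrated eigenvalue
equation `f'(x) = y(x)f(x) − ∫₀ˣ y f' − Λ∫₀ˣ f` with `f(0) = f'(0) = 0` vanishes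
identically on `[0,∞)`. -/
theorem stmt_5 (y f f' : ℝ → ℝ) (Λ : ℝ)
    (hy : ContinuousOn y (Ici 0))
    (hderiv : ∀ x ∈ Ici (0:ℝ), HasDerivWithinAt f (f' x) (Ici 0) x)
    (hf'cont : ContinuousOn f' (Ici 0))
    (hf0 : f 0 = 0) (hf'0 : f' 0 = 0)
    (heq : ∀ x ∈ Ici (0:ℝ),
      f' x = y x * f x - (∫ t in (0:ℝ)..x, y t * f' t) - Λ * ∫ t in (0:ℝ)..x, f t) :
    ∀ x ∈ Ici (0:ℝ), f x = 0 := by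
  -- extend everything continuously to all of ℝ via `max · 0`
  have hproj : Continuous (fun x : ℝ => max x 0) := continuous_id.max continuous_const
  have hmem : ∀ x : ℝ, max x 0 ∈ Ici (0:ℝ) := fun x => mem_Ici.mpr (le_max_right _ _)
  set Y : ℝ → ℝ := fun x => y (max x 0) with hY
  set F' : ℝ → ℝ := fun x => f' (max x 0) with hF'
  set F : ℝ → ℝ := fun x => f (max x 0) with hF
  have hfc : ContinuousOn f (Ici 0) := fun x hx => (hderiv x hx).continuousWithinAt
  have hYc : Continuous Y := hy.comp_continuous hproj hmem
  have hF'c : Continuous F' := hf'cont.comp_continuous hproj hmem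
  have hFc : Continuous F := hfc.comp_continuous hproj hmem
  have hagree : ∀ x : ℝ, 0 ≤ x → ∀ g : ℝ → ℝ,
      (∫ t in (0:ℝ)..x, g (max t 0)) = ∫ t in (0:ℝ)..x, g t := by
    intro x hx g
    apply intervalIntegral.integral_congr
    intro t ht
    rw [uIcc_of_le hx] at ht
    simp [max_eq_left ht.1]
  -- primitives
  set A : ℝ → ℝ := fun x => ∫ t in (0:ℝ)..x, Y t * F' t with hA
  set B : ℝ → ℝ := fun x => ∫ t in (0:ℝ)..x, F t with hB
  have hAeq : ∀ x : ℝ, 0 ≤ x → A x = ∫ t in (0:ℝ)..x, y t * f' t := fun x hx =>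
    hagree x hx (fun t => y t * f' t)
  have hBeq : ∀ x : ℝ, 0 ≤ x → B x = ∫ t in (0:ℝ)..x, f t := fun x hx => hagree x hx f
  have hAderiv : ∀ x : ℝ, HasDerivAt A (Y x * F' x) x := fun x =>
    intervalIntegral.integral_hasDerivAt_right
      ((hYc.mul hF'c).intervalIntegrable 0 x)
      (hYc.mul hF'c).aestronglyMeasurable.stronglyMeasurableAtFilter
      (hYc.mul hF'c).continuousAt
  have hBderiv : ∀ x : ℝ, HasDerivAt B (F x) x := fun x =>
    intervalIntegral.integral_hasDerivAt_right
      (hFc.intervalIntegrable 0 x)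
      hFc.aestronglyMeasurable.stronglyMeasurableAtFilter
      hFc.continuousAt
  -- it suffices to prove the claim on `[0, b]` for each `b`
  suffices H : ∀ b : ℝ, ∀ x ∈ Icc (0:ℝ) b, f x = 0 by
    intro x hx
    exact H x x ⟨hx, le_refl x⟩
  intro b
  -- the vector-valued function
  set u : ℝ → ℝ × ℝ × ℝ := fun x => (f x, A x, B x) with hu
  set u' : ℝ → ℝ × ℝ × ℝ := fun x => (f' x, Y x * F' x, F x) with hu'
  -- bound on `Y` on `[0, b]`
  obtain ⟨M, hM⟩ := isCompact_Icc.exists_bound_of_continuousOn (s := Icc (0:ℝ) b)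
    hYc.continuousOn
  set K : ℝ := (|M| + 1) * (|M| + 1 + |Λ|) with hK
  have hc1 : (1:ℝ) ≤ |M| + 1 := by linarith [abs_nonneg M]
  have hc2 : (0:ℝ) ≤ |M| + 1 + |Λ| := by linarith [abs_nonneg M, abs_nonneg Λ]
  have hK1 : 1 ≤ K := by
    rw [hK]
    nlinarith [abs_nonneg M, abs_nonneg Λ]
  -- continuity of `u` on `[0, b]`
  have hAc : Continuous A := continuous_iff_continuousAt.2 fun x => (hAderiv x).continuousAt
  have hBc : Continuous B := continuous_iff_continuousAt.2 fun x => (hBderiv x).continuousAt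
  have hucont : ContinuousOn u (Icc 0 b) :=
    (hfc.mono (fun t ht => ht.1)).prodMk (hAc.continuousOn.prodMk hBc.continuousOn)
  -- derivative of `u`
  have huderiv : ∀ x ∈ Ico (0:ℝ) b, HasDerivWithinAt u (u' x) (Ici x) x := by
    intro x hx
    exact ((hderiv x hx.1).mono (Ici_subset_Ici.2 hx.1)).prodMk
      (((hAderiv x).hasDerivWithinAt).prodMk ((hBderiv x).hasDerivWithinAt))
  -- the Gronwall bound
  have hbound : ∀ x ∈ Ico (0:ℝ) b, ‖u' x‖ ≤ K * ‖u x‖ + 0 := by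
    intro x hx
    have hx0 : (0:ℝ) ≤ x := hx.1
    have hmx : max x 0 = x := max_eq_left hx0
    have hyx : |Y x| ≤ |M| := by
      have := hM x ⟨hx.1, le_of_lt hx.2⟩
      rw [Real.norm_eq_abs] at this
      exact le_trans this (le_abs_self M)
    set N : ℝ := ‖u x‖ with hN
    have hN0 : 0 ≤ N := norm_nonneg _
    have hfN : |f x| ≤ N := by
      exact norm_fst_le (u x)
    have hAN : |A x| ≤ N := by
      have h1 := norm_fst_le ((u x).2)
      have h2 := norm_snd_le (u x)
      exact le_trans h1 h2
    have hBN : |B x| ≤ N := by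
      have h1 := norm_snd_le ((u x).2)
      have h2 := norm_snd_le (u x)
      exact le_trans h1 h2
    -- expression for f' x
    have hfx' : f' x = Y x * f x - A x - Λ * B x := by
      rw [heq x hx0, hAeq x hx0, hBeq x hx0, hY]
      simp [hmx]
    have hf'N : |f' x| ≤ (|M| + 1 + |Λ|) * N := by
      have t1 : |Y x| * |f x| ≤ |M| * N :=
        mul_le_mul hyx hfN (abs_nonneg _) (abs_nonneg _)
      have t3 : |Λ| * |B x| ≤ |Λ| * N := mul_le_mul_of_nonneg_left hBN (abs_nonneg _)
      have tri : |f' x| ≤ |Y x * f x| + |A x| + |Λ * B x| := by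
        rw [hfx']
        exact le_trans (abs_sub _ _) (add_le_add_left (abs_sub _ _) _)
      rw [abs_mul, abs_mul] at tri
      nlinarith
    have hstep : (|M| + 1 + |Λ|) * N ≤ K * N := by
      rw [hK]
      exact mul_le_mul_of_nonneg_right (le_mul_of_one_le_left hc2 hc1) hN0
    -- bound the three components
    have h1 : |f' x| ≤ K * N := le_trans hf'N hstep
    have h2 : |Y x * F' x| ≤ K * N := by
      rw [abs_mul]
      have hFx' : F' x = f' x := by rw [hF']; simp [hmx]
      rw [hFx']
      calc |Y x| * |f' x| ≤ (|M| + 1) * ((|M| + 1 + |Λ|) * N) := by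
            refine mul_le_mul (by linarith) hf'N (abs_nonneg _) (by linarith)
      _ = K * N := by rw [hK]; ring
    have h3 : |F x| ≤ K * N := by
      have hFx : F x = f x := by rw [hF]; simp [hmx]
      rw [hFx]
      exact le_trans hfN (le_mul_of_one_le_left hN0 hK1)
    rw [add_zero]
    simp only [hu', Prod.norm_def, Real.norm_eq_abs]
    exact max_le h1 (max_le h2 h3)
  -- initial condition
  have hu0 : ‖u 0‖ ≤ 0 := by
    have hA0 : A 0 = 0 := intervalIntegral.integral_same
    have hB0 : B 0 = 0 := intervalIntegral.integral_same
    simp [hu, hf0, hA0, hB0, Prod.norm_def]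
  -- Gronwall
  have hmain := norm_le_gronwallBound_of_norm_deriv_right_le (δ := 0) (K := K) (ε := 0)
    hucont huderiv hu0 hbound
  intro x hx
  have hx' := hmain x hx
  rw [gronwallBound_ε0_δ0] at hx'
  have hfx : |f x| ≤ 0 := by
    have h1 := norm_fst_le (u x)
    simp only [hu, Real.norm_eq_abs] at h1
    exact le_trans h1 hx'
  exact abs_eq_zero.mp (le_antisymm hfx (abs_nonneg _))
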